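/- Let f : ℍ → ℍ be continuously real-differentiable on an open set U ⊆ ℍ, and let q₀, q₁ ∈ U be such that the segment joining q₀ and q₁ is contained in U. Set λ := q₁ − q₀. Then f(q₁) − f(q₀) = ∫₀¹ Σ_{η ∈ {1,i,j,k}} (∂f/∂q^η)(q₀ + t λ) · (η λ η⁻¹) dt, and also f(q₁) − f(q₀) = ∫₀¹ Σ_{η ∈ {1,i,j,k}} (∂f/∂q^{η*})(q₀ + t λ) · (η λ η⁻¹)* dt. -/

import Mathlib

open Quaternion Filter Topology Asymptotics

noncomputable section

/-- The imaginary unit `i` of the real quaternions. -/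
def qI : ℍ[ℝ] := ⟨0, 1, 0, 0⟩
/-- The imaginary unit `j` of the real quaternions. -/
def qJ : ℍ[ℝ] := ⟨0, 0, 1, 0⟩
/-- The imaginary unit `k` of the real quaternions. -/
def qK : ℍ[ℝ] := ⟨0, 0, 0, 1⟩

/-- Quaternion rotation `p ↦ μ p μ⁻¹`. -/
def qRot (μ p : ℍ[ℝ]) : ℍ[ℝ] := μ * p * μ⁻¹

/-- The left GHR derivative `∂f/∂q^μ` at `q`. -/
def lD (f : ℍ[ℝ] → ℍ[ℝ]) (μ q : ℍ[ℝ]) : ℍ[ℝ] :=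
  (4 : ℍ[ℝ])⁻¹ * (fderiv ℝ f q 1 - fderiv ℝ f q qI * qRot μ qI
    - fderiv ℝ f q qJ * qRot μ qJ - fderiv ℝ f q qK * qRot μ qK)

/-- The left conjugate GHR derivative `∂f/∂q^{μ*}` at `q`. -/
def lDc (f : ℍ[ℝ] → ℍ[ℝ]) (μ q : ℍ[ℝ]) : ℍ[ℝ] :=
  (4 : ℍ[ℝ])⁻¹ * (fderiv ℝ f q 1 + fderiv ℝ f q qI * qRot μ qI
    + fderiv ℝ f q qJ * qRot μ qJ + fderiv ℝ f q qK * qRot μ qK)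

/-- The right GHR derivative `∂ᵣf/∂q^μ` at `q`. -/
def rD (f : ℍ[ℝ] → ℍ[ℝ]) (μ q : ℍ[ℝ]) : ℍ[ℝ] :=
  (4 : ℍ[ℝ])⁻¹ * (fderiv ℝ f q 1 - qRot μ qI * fderiv ℝ f q qI
    - qRot μ qJ * fderiv ℝ f q qJ - qRot μ qK * fderiv ℝ f q qK)

/-- The right conjugate GHR derivative `∂ᵣf/∂q^{μ*}` at `q`. -/
def rDc (f : ℍ[ℝ] → ℍ[ℝ]) (μ q : ℍ[ℝ]) : ℍ[ℝ] :=
  (4 : ℍ[ℝ])⁻¹ * (fderiv ℝ f q 1 + qRot μ qI * fderiv ℝ f q qI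
    + qRot μ qJ * fderiv ℝ f q qJ + qRot μ qK * fderiv ℝ f q qK)


lemma qI_inv : qI⁻¹ = -qI := by
  apply inv_eq_of_mul_eq_one_right; ext <;> simp [Quaternion.re_mul, Quaternion.imI_mul, Quaternion.imJ_mul, Quaternion.imK_mul] <;> simp [qI]
lemma qJ_inv : qJ⁻¹ = -qJ := by
  apply inv_eq_of_mul_eq_one_right; ext <;> simp [Quaternion.re_mul, Quaternion.imI_mul, Quaternion.imJ_mul, Quaternion.imK_mul] <;> simp [qJ]
lemma qK_inv : qK⁻¹ = -qK := by
  apply inv_eq_of_mul_eq_one_right; ext <;> simp [Quaternion.re_mul, Quaternion.imI_mul, Quaternion.imJ_mul, Quaternion.imK_mul] <;> simp [qK]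
lemma four_inv : (4 : ℍ[ℝ])⁻¹ = ((4⁻¹ : ℝ) : ℍ[ℝ]) := by
  apply inv_eq_of_mul_eq_one_right
  have h4 : (4 : ℍ[ℝ]) = ((4:ℝ) : ℍ[ℝ]) := by norm_cast
  rw [h4, ← Quaternion.coe_mul]; norm_num

set_option maxHeartbeats 2000000 in
lemma key1 (a b c d l : ℍ[ℝ]) :
    (4:ℍ[ℝ])⁻¹ * (a - b * qRot 1 qI - c * qRot 1 qJ - d * qRot 1 qK) * qRot 1 l
  + (4:ℍ[ℝ])⁻¹ * (a - b * qRot qI qI - c * qRot qI qJ - d * qRot qI qK) * qRot qI l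
  + (4:ℍ[ℝ])⁻¹ * (a - b * qRot qJ qI - c * qRot qJ qJ - d * qRot qJ qK) * qRot qJ l
  + (4:ℍ[ℝ])⁻¹ * (a - b * qRot qK qI - c * qRot qK qJ - d * qRot qK qK) * qRot qK l
  = l.re • a + l.imI • b + l.imJ • c + l.imK • d := by
  simp only [qRot, qI_inv, qJ_inv, qK_inv, four_inv, inv_one, one_mul, mul_one,
    Quaternion.coe_mul_eq_smul]
  ext <;>
    simp only [Quaternion.re_add, Quaternion.imI_add, Quaternion.imJ_add,
      Quaternion.imK_add, Quaternion.re_sub, Quaternion.imI_sub, Quaternion.imJ_sub,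
      Quaternion.imK_sub, Quaternion.re_neg, Quaternion.imI_neg, Quaternion.imJ_neg,
      Quaternion.imK_neg, Quaternion.re_mul, Quaternion.imI_mul, Quaternion.imJ_mul,
      Quaternion.imK_mul, Quaternion.re_smul, Quaternion.imI_smul, Quaternion.imJ_smul,
      Quaternion.imK_smul, smul_eq_mul] <;>
    simp only [qI, qJ, qK] <;>
    ring

set_option maxHeartbeats 2000000 in
lemma key2 (a b c d l : ℍ[ℝ]) :
    (4:ℍ[ℝ])⁻¹ * (a + b * qRot 1 qI + c * qRot 1 qJ + d * qRot 1 qK) * star (qRot 1 l)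
  + (4:ℍ[ℝ])⁻¹ * (a + b * qRot qI qI + c * qRot qI qJ + d * qRot qI qK) * star (qRot qI l)
  + (4:ℍ[ℝ])⁻¹ * (a + b * qRot qJ qI + c * qRot qJ qJ + d * qRot qJ qK) * star (qRot qJ l)
  + (4:ℍ[ℝ])⁻¹ * (a + b * qRot qK qI + c * qRot qK qJ + d * qRot qK qK) * star (qRot qK l)
  = l.re • a + l.imI • b + l.imJ • c + l.imK • d := by
  simp only [qRot, qI_inv, qJ_inv, qK_inv, four_inv, inv_one, one_mul, mul_one,
    Quaternion.coe_mul_eq_smul]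
  ext <;>
    simp only [Quaternion.re_add, Quaternion.imI_add, Quaternion.imJ_add,
      Quaternion.imK_add, Quaternion.re_sub, Quaternion.imI_sub, Quaternion.imJ_sub,
      Quaternion.imK_sub, Quaternion.re_neg, Quaternion.imI_neg, Quaternion.imJ_neg,
      Quaternion.imK_neg, Quaternion.re_mul, Quaternion.imI_mul, Quaternion.imJ_mul,
      Quaternion.imK_mul, Quaternion.re_smul, Quaternion.imI_smul, Quaternion.imJ_smul,
      Quaternion.imK_smul, Quaternion.re_star, Quaternion.imI_star, Quaternion.imJ_star,
      Quaternion.imK_star, smul_eq_mul] <;>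
    simp only [qI, qJ, qK] <;>
    ring

lemma clm_apply_decomp (D : ℍ[ℝ] →L[ℝ] ℍ[ℝ]) (l : ℍ[ℝ]) :
    D l = l.re • D 1 + l.imI • D qI + l.imJ • D qJ + l.imK • D qK := by
  have hl : l = l.re • (1:ℍ[ℝ]) + l.imI • qI + l.imJ • qJ + l.imK • qK := by
    ext <;> simp [Quaternion.re_smul, Quaternion.imI_smul, Quaternion.imJ_smul, Quaternion.imK_smul] <;> simp [qI, qJ, qK]
  conv_lhs => rw [hl]
  simp [map_add, map_smul]

lemma fund (f : ℍ[ℝ] → ℍ[ℝ]) (U : Set ℍ[ℝ]) (hU : IsOpen U)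
    (hf : ContDiffOn ℝ 1 f U) (q₀ q₁ : ℍ[ℝ])
    (hseg : segment ℝ q₀ q₁ ⊆ U) :
    f q₁ - f q₀ = ∫ t in (0:ℝ)..1, fderiv ℝ f (q₀ + t • (q₁ - q₀)) (q₁ - q₀) := by
  set l := q₁ - q₀ with hl
  have hmem : ∀ t ∈ Set.uIcc (0:ℝ) 1, q₀ + t • l ∈ U := by
    intro t ht
    rw [Set.uIcc_of_le zero_le_one] at ht
    exact hseg (by rw [segment_eq_image']; exact ⟨t, ht, rfl⟩)
  have hdiff : ∀ q ∈ U, DifferentiableAt ℝ f q := fun q hq =>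
    (hf.contDiffAt (hU.mem_nhds hq)).differentiableAt one_ne_zero
  have hγ : ∀ t : ℝ, HasDerivAt (fun s : ℝ => q₀ + s • l) l t := by
    intro t
    simpa using ((hasDerivAt_id t).smul_const l).const_add q₀
  have hderiv : ∀ t ∈ Set.uIcc (0:ℝ) 1,
      HasDerivAt (fun s : ℝ => f (q₀ + s • l)) (fderiv ℝ f (q₀ + t • l) l) t := by
    intro t ht
    exact ((hdiff _ (hmem t ht)).hasFDerivAt).comp_hasDerivAt t (hγ t)
  have hcont : ContinuousOn (fun t : ℝ => fderiv ℝ f (q₀ + t • l) l) (Set.uIcc (0:ℝ) 1) := by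
    have h1 : ContinuousOn (fderiv ℝ f) U := hf.continuousOn_fderiv_of_isOpen hU le_rfl
    have h2 : ContinuousOn (fun t : ℝ => q₀ + t • l) (Set.uIcc (0:ℝ) 1) := by fun_prop
    exact (h1.comp h2 hmem).clm_apply continuousOn_const
  have h := intervalIntegral.integral_eq_sub_of_hasDerivAt hderiv hcont.intervalIntegrable
  rw [h]
  simp [hl]

set_option maxHeartbeats 2000000 in
theorem mean_value_theorem_left_form
    (f : ℍ[ℝ] → ℍ[ℝ]) (U : Set ℍ[ℝ]) (hU : IsOpen U)
    (hf : ContDiffOn ℝ 1 f U) (q₀ q₁ : ℍ[ℝ]) (hq₀ : q₀ ∈ U) (hq₁ : q₁ ∈ U)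
    (hseg : segment ℝ q₀ q₁ ⊆ U) :
    (f q₁ - f q₀ = ∫ t in (0:ℝ)..1,
        (lD f 1 (q₀ + t • (q₁ - q₀)) * qRot 1 (q₁ - q₀)
          + lD f qI (q₀ + t • (q₁ - q₀)) * qRot qI (q₁ - q₀)
          + lD f qJ (q₀ + t • (q₁ - q₀)) * qRot qJ (q₁ - q₀)
          + lD f qK (q₀ + t • (q₁ - q₀)) * qRot qK (q₁ - q₀))) ∧
    (f q₁ - f q₀ = ∫ t in (0:ℝ)..1,
        (lDc f 1 (q₀ + t • (q₁ - q₀)) * star (qRot 1 (q₁ - q₀))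
          + lDc f qI (q₀ + t • (q₁ - q₀)) * star (qRot qI (q₁ - q₀))
          + lDc f qJ (q₀ + t • (q₁ - q₀)) * star (qRot qJ (q₁ - q₀))
          + lDc f qK (q₀ + t • (q₁ - q₀)) * star (qRot qK (q₁ - q₀)))) := by
  have hfund := fund f U hU hf q₀ q₁ hseg
  constructor
  · rw [hfund]
    apply intervalIntegral.integral_congr
    intro t _
    simp only [lD]
    exact ((key1 _ _ _ _ _).trans (clm_apply_decomp _ _).symm).symm
  · rw [hfund]
    apply intervalIntegral.integral_congr
    intro t _
    simp only [lDc]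
    exact ((key2 _ _ _ _ _).trans (clm_apply_decomp _ _).symm).symm

end
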